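/- Let θ₁ ∈ ℝ and k a positive integer. As ρ → 1⁻, (1/π)·∫_{−π}^{π} cos(kθ)·u_δ(ρ, θ, θ₁) dθ tends to cos(kθ₁)/π, and (1/π)·∫_{−π}^{π} sin(kθ)·u_δ(ρ, θ, θ₁) dθ tends to sin(kθ₁)/π. -/

import Mathlib

open Real Filter

lemma int_cos_izero (m : ℤ) (hm : m ≠ 0) : ∫ x in (-π)..π, Real.cos (m * x) = 0 := by
  have hm' : (m : ℝ) ≠ 0 := Int.cast_ne_zero.2 hm
  rw [intervalIntegral.integral_comp_mul_left Real.cos hm', integral_cos]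
  have h1 : Real.sin ((m:ℝ) * π) = 0 := Real.sin_int_mul_pi m
  have h2 : Real.sin ((m:ℝ) * -π) = 0 := by
    rw [mul_neg, Real.sin_neg, h1, neg_zero]
  simp [h1, h2]

lemma int_sin_izero (m : ℤ) : ∫ x in (-π)..π, Real.sin (m * x) = 0 := by
  rcases eq_or_ne m 0 with rfl | hm
  · simp
  · have hm' : (m : ℝ) ≠ 0 := Int.cast_ne_zero.2 hm
    rw [intervalIntegral.integral_comp_mul_left Real.sin hm', integral_sin]
    rw [mul_neg, Real.cos_neg]
    simp



lemma orth_cc (m n : ℕ) (hm : m ≠ 0) (hn : n ≠ 0) :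
    ∫ x in (-π)..π, Real.cos (m * x) * Real.cos (n * x) = if m = n then π else 0 := by
  have key : ∀ x : ℝ, Real.cos (m * x) * Real.cos (n * x)
      = (Real.cos ((((m:ℤ) - n : ℤ):ℝ) * x) + Real.cos ((((m:ℤ) + n : ℤ):ℝ) * x)) / 2 := by
    intro x
    push_cast
    rw [sub_mul, add_mul, Real.cos_sub, Real.cos_add]
    ring
  simp_rw [key]
  rw [intervalIntegral.integral_div]
  have hic : ∀ c : ℝ, IntervalIntegrable (fun x => Real.cos (c * x)) MeasureTheory.volume (-π) π :=
    fun c => (by fun_prop : Continuous fun x : ℝ => Real.cos (c * x)).intervalIntegrable _ _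
  rw [intervalIntegral.integral_add (hic _) (hic _)]
  rw [int_cos_izero ((m:ℤ) + n) (by omega)]
  rcases eq_or_ne m n with rfl | hmn
  · simp [Real.two_pi_pos.le]

  · rw [int_cos_izero ((m:ℤ) - n) (by omega)]
    simp [hmn]

lemma orth_ss (m n : ℕ) (hm : m ≠ 0) (hn : n ≠ 0) :
    ∫ x in (-π)..π, Real.sin (m * x) * Real.sin (n * x) = if m = n then π else 0 := by
  have key : ∀ x : ℝ, Real.sin (m * x) * Real.sin (n * x)
      = (Real.cos ((((m:ℤ) - n : ℤ):ℝ) * x) - Real.cos ((((m:ℤ) + n : ℤ):ℝ) * x)) / 2 := by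
    intro x
    push_cast
    rw [sub_mul, add_mul, Real.cos_sub, Real.cos_add]
    ring
  simp_rw [key]
  rw [intervalIntegral.integral_div]
  have hic : ∀ c : ℝ, IntervalIntegrable (fun x => Real.cos (c * x)) MeasureTheory.volume (-π) π :=
    fun c => (by fun_prop : Continuous fun x : ℝ => Real.cos (c * x)).intervalIntegrable _ _
  rw [intervalIntegral.integral_sub (hic _) (hic _)]
  rw [int_cos_izero ((m:ℤ) + n) (by omega)]
  rcases eq_or_ne m n with rfl | hmn
  · simp
  · rw [int_cos_izero ((m:ℤ) - n) (by omega)]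
    simp [hmn]

lemma orth_cs (m n : ℕ) :
    ∫ x in (-π)..π, Real.cos (m * x) * Real.sin (n * x) = 0 := by
  have key : ∀ x : ℝ, Real.cos (m * x) * Real.sin (n * x)
      = (Real.sin ((((m:ℤ) + n : ℤ):ℝ) * x) - Real.sin ((((m:ℤ) - n : ℤ):ℝ) * x)) / 2 := by
    intro x
    push_cast
    rw [sub_mul, add_mul, Real.sin_sub, Real.sin_add]
    ring
  simp_rw [key]
  rw [intervalIntegral.integral_div]
  have his : ∀ c : ℝ, IntervalIntegrable (fun x => Real.sin (c * x)) MeasureTheory.volume (-π) π :=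
    fun c => (by fun_prop : Continuous fun x : ℝ => Real.sin (c * x)).intervalIntegrable _ _
  rw [intervalIntegral.integral_sub (his _) (his _), int_sin_izero ((m:ℤ) + n),
    int_sin_izero ((m:ℤ) - n)]
  simp

lemma denom_pos {ρ : ℝ} (h0 : 0 ≤ ρ) (h1 : ρ < 1) (φ : ℝ) :
    0 < ρ ^ 2 + 1 - 2 * ρ * Real.cos φ := by
  nlinarith [Real.cos_le_one φ, Real.neg_one_le_cos φ, sq_nonneg (1 - ρ)]

lemma hasSum_poisson {ρ : ℝ} (h0 : 0 ≤ ρ) (h1 : ρ < 1) (φ : ℝ) :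
    HasSum (fun n : ℕ => ρ ^ (n + 1) * Real.cos ((n + 1) * φ))
      ((ρ * Real.cos φ - ρ ^ 2) / (ρ ^ 2 + 1 - 2 * ρ * Real.cos φ)) := by
  set w : ℂ := (ρ : ℂ) * Complex.exp (φ * Complex.I) with hw
  have hnw : ‖w‖ < 1 := by
    have : ‖w‖ = ρ := by
      simp [hw, map_mul, Complex.norm_exp_ofReal_mul_I, _root_.abs_of_nonneg h0]
    rw [this]; exact h1
  have hg : HasSum (fun n : ℕ => w ^ (n + 1)) (w * (1 - w)⁻¹) := by
    have h := (hasSum_geometric_of_norm_lt_one hnw).mul_left w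
    simpa only [← pow_succ'] using h
  have hre := Complex.reCLM.hasSum hg
  simp only [Complex.reCLM_apply] at hre
  have hterm : ∀ n : ℕ, (w ^ (n + 1)).re = ρ ^ (n + 1) * Real.cos ((n + 1) * φ) := by
    intro n
    have : w ^ (n + 1) = ((ρ ^ (n + 1) : ℝ) : ℂ) * Complex.exp ((((n:ℝ) + 1) * φ : ℝ) * Complex.I) := by
      rw [hw, mul_pow, ← Complex.exp_nat_mul]
      push_cast
      ring_nf
    rw [this, Complex.re_ofReal_mul, Complex.exp_ofReal_mul_I_re]
  have hre' : HasSum (fun n : ℕ => ρ ^ (n + 1) * Real.cos ((n + 1) * φ)) ((w * (1 - w)⁻¹).re) := by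
    simp only [hterm] at hre; exact hre
  convert hre' using 1
  have hwre : w.re = ρ * Real.cos φ := by
    rw [hw, Complex.re_ofReal_mul, Complex.exp_ofReal_mul_I_re]
  have hwim : w.im = ρ * Real.sin φ := by
    rw [hw, Complex.im_ofReal_mul, Complex.exp_ofReal_mul_I_im]
  have hD := denom_pos h0 h1 φ
  have hnormSq : Complex.normSq (1 - w) = ρ ^ 2 + 1 - 2 * ρ * Real.cos φ := by
    rw [Complex.normSq_apply]
    simp only [Complex.sub_re, Complex.sub_im, Complex.one_re, Complex.one_im, hwre, hwim]
    nlinarith [Real.sin_sq_add_cos_sq φ]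
  rw [← div_eq_mul_inv, Complex.div_re, hnormSq]
  simp only [Complex.sub_re, Complex.sub_im, Complex.one_re, Complex.one_im, hwre, hwim]
  field_simp
  congr 1
  linear_combination ρ ^ 2 * Real.sin_sq_add_cos_sq φ


lemma integral_u (θ₁ : ℝ) (k : ℕ) (hk : 0 < k) {ρ : ℝ} (h0 : 0 ≤ ρ) (h1 : ρ < 1)
    (g : ℝ → ℝ) (v : ℝ) (hg : Continuous g) (hgb : ∀ x, |g x| ≤ 1)
    (hg0 : ∫ θ in (-π)..π, g θ = 0)
    (horth : ∀ n : ℕ, ∫ θ in (-π)..π, g θ * Real.cos (((n : ℝ) + 1) * (θ - θ₁))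
      = if n + 1 = k then π * v else 0) :
    ∫ θ in (-π)..π, g θ *
        (1 / (2 * π) - (1 / π) * (ρ * (ρ - Real.cos (θ - θ₁))) /
          ((ρ ^ 2 + 1) - 2 * ρ * Real.cos (θ - θ₁))) = ρ ^ k * v := by
  have hπ : (0:ℝ) < π := Real.pi_pos
  set D : ℝ → ℝ := fun θ => ρ ^ 2 + 1 - 2 * ρ * Real.cos (θ - θ₁) with hD
  have hDpos : ∀ θ, 0 < D θ := fun θ => denom_pos h0 h1 (θ - θ₁)
  -- the tail function
  set f : ℝ → ℝ := fun θ => g θ * ((1 / π) * ((ρ * Real.cos (θ - θ₁) - ρ ^ 2) / D θ)) with hf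
  set F : ℕ → ℝ → ℝ := fun n θ => g θ * ((1 / π) * (ρ ^ (n + 1) * Real.cos (((n:ℝ) + 1) * (θ - θ₁)))) with hF
  have hFcont : ∀ n, Continuous (F n) := by
    intro n
    exact hg.mul (continuous_const.mul (continuous_const.mul
      (Real.continuous_cos.comp (continuous_const.mul (continuous_id.sub continuous_const)))))
  have hfcont : Continuous f := by
    apply hg.mul
    apply continuous_const.mul
    apply Continuous.div
    · fun_prop
    · fun_prop
    · exact fun θ => (hDpos θ).ne'
  have hlim : ∀ θ : ℝ, HasSum (fun n => F n θ) (f θ) := by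
    intro θ
    exact ((hasSum_poisson h0 h1 (θ - θ₁)).mul_left (1 / π)).mul_left (g θ)
  have hbound_sum : Summable (fun n : ℕ => (1 / π) * ρ ^ (n + 1)) := by
    apply Summable.mul_left
    exact ((summable_geometric_of_lt_one h0 h1).mul_left ρ).congr
      (fun n => by rw [pow_succ'])
  have hsum_int : HasSum (fun n => ∫ θ in (-π)..π, F n θ) (∫ θ in (-π)..π, f θ) := by
    apply intervalIntegral.hasSum_integral_of_dominated_convergence
      (bound := fun n _ => (1 / π) * ρ ^ (n + 1))
    · exact fun n => ((hFcont n).aestronglyMeasurable).restrict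
    · intro n
      filter_upwards with θ _
      have h2 : |Real.cos (((n:ℝ) + 1) * (θ - θ₁))| ≤ 1 := Real.abs_cos_le_one _
      have h3 : 0 ≤ ρ ^ (n + 1) := pow_nonneg h0 _
      have h4 : (0:ℝ) < 1 / π := by positivity
      calc ‖F n θ‖ = |g θ| * ((1 / π) * (ρ ^ (n + 1) * |Real.cos (((n:ℝ) + 1) * (θ - θ₁))|)) := by
            rw [hF]
            simp [abs_mul, abs_pow, _root_.abs_of_nonneg h0, _root_.abs_of_pos hπ]
        _ ≤ 1 * ((1 / π) * (ρ ^ (n + 1) * 1)) := by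
            apply mul_le_mul (hgb θ) _ (by positivity) zero_le_one
            apply mul_le_mul_of_nonneg_left _ h4.le
            exact mul_le_mul_of_nonneg_left h2 h3
        _ = (1 / π) * ρ ^ (n + 1) := by ring
    · filter_upwards with θ _
      exact hbound_sum
    · exact intervalIntegrable_const
    · filter_upwards with θ _
      exact hlim θ
  have hintF : ∀ n : ℕ, (∫ θ in (-π)..π, F n θ) = if n + 1 = k then ρ ^ k * v else 0 := by
    intro n
    have : ∀ θ, F n θ = ((1 / π) * ρ ^ (n + 1)) * (g θ * Real.cos (((n:ℝ) + 1) * (θ - θ₁))) := by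
      intro θ; rw [hF]; ring
    rw [intervalIntegral.integral_congr (fun θ _ => this θ),
      intervalIntegral.integral_const_mul, horth n]
    rcases eq_or_ne (n + 1) k with h | h
    · rw [if_pos h, if_pos h, ← h]
      field_simp
    · rw [if_neg h, if_neg h, mul_zero]
  have hsum_int' : HasSum (fun n : ℕ => if n + 1 = k then ρ ^ k * v else 0)
      (∫ θ in (-π)..π, f θ) := by
    rwa [funext hintF] at hsum_int
  have hval : (∫ θ in (-π)..π, f θ) = ρ ^ k * v := by
    have h2 : HasSum (fun n : ℕ => if n + 1 = k then ρ ^ k * v else 0) (ρ ^ k * v) := by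
      have hfe : (fun n : ℕ => if n + 1 = k then ρ ^ k * v else 0)
          = (fun n : ℕ => if n = k - 1 then ρ ^ k * v else 0) := by
        funext n
        have hiff : (n + 1 = k) ↔ (n = k - 1) := by omega
        rw [if_congr hiff rfl rfl]
      rw [hfe]
      exact hasSum_ite_eq (k - 1) (ρ ^ k * v)
    exact hsum_int'.unique h2
  -- final assembly
  have hsplit : ∀ θ, g θ *
      (1 / (2 * π) - (1 / π) * (ρ * (ρ - Real.cos (θ - θ₁))) /
        ((ρ ^ 2 + 1) - 2 * ρ * Real.cos (θ - θ₁)))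
      = (1 / (2 * π)) * g θ + f θ := by
    intro θ
    rw [hf, hD]
    ring
  rw [intervalIntegral.integral_congr (fun θ _ => hsplit θ),
    intervalIntegral.integral_add (f := fun θ => 1 / (2 * π) * g θ)
      ((continuous_const.mul hg).intervalIntegrable _ _)
      (hfcont.intervalIntegrable _ _),
    intervalIntegral.integral_const_mul, hg0, mul_zero, zero_add, hval]


lemma horth_cos (θ₁ : ℝ) (k : ℕ) (hk : k ≠ 0) (n : ℕ) :
    ∫ θ in (-π)..π, Real.cos (k * θ) * Real.cos (((n:ℝ) + 1) * (θ - θ₁))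
      = if n + 1 = k then π * Real.cos (k * θ₁) else 0 := by
  have hN : ((n:ℝ) + 1) = ((n + 1 : ℕ) : ℝ) := by push_cast; ring
  have key : ∀ θ : ℝ, Real.cos (k * θ) * Real.cos (((n:ℝ) + 1) * (θ - θ₁))
      = Real.cos (((n + 1 : ℕ):ℝ) * θ₁) * (Real.cos ((k:ℝ) * θ) * Real.cos (((n + 1 : ℕ):ℝ) * θ))
        + Real.sin (((n + 1 : ℕ):ℝ) * θ₁) * (Real.cos ((k:ℝ) * θ) * Real.sin (((n + 1 : ℕ):ℝ) * θ)) := by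
    intro θ
    rw [hN, mul_sub, Real.cos_sub]
    ring
  rw [intervalIntegral.integral_congr (fun θ _ => key θ),
    intervalIntegral.integral_add
      ((by fun_prop : Continuous fun θ : ℝ => Real.cos (((n + 1 : ℕ):ℝ) * θ₁) * (Real.cos ((k:ℝ) * θ) * Real.cos (((n + 1 : ℕ):ℝ) * θ))).intervalIntegrable _ _)
      ((by fun_prop : Continuous fun θ : ℝ => Real.sin (((n + 1 : ℕ):ℝ) * θ₁) * (Real.cos ((k:ℝ) * θ) * Real.sin (((n + 1 : ℕ):ℝ) * θ))).intervalIntegrable _ _),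
    intervalIntegral.integral_const_mul, intervalIntegral.integral_const_mul,
    orth_cc k (n + 1) hk (by omega), orth_cs k (n + 1), mul_zero, add_zero]
  rcases eq_or_ne (n + 1) k with h | h
  · subst h
    simp [mul_comm]
  · simp [h, Ne.symm h]

lemma horth_sin (θ₁ : ℝ) (k : ℕ) (hk : k ≠ 0) (n : ℕ) :
    ∫ θ in (-π)..π, Real.sin (k * θ) * Real.cos (((n:ℝ) + 1) * (θ - θ₁))
      = if n + 1 = k then π * Real.sin (k * θ₁) else 0 := by
  have hN : ((n:ℝ) + 1) = ((n + 1 : ℕ) : ℝ) := by push_cast; ring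
  have key : ∀ θ : ℝ, Real.sin (k * θ) * Real.cos (((n:ℝ) + 1) * (θ - θ₁))
      = Real.cos (((n + 1 : ℕ):ℝ) * θ₁) * (Real.cos (((n + 1 : ℕ):ℝ) * θ) * Real.sin ((k:ℝ) * θ))
        + Real.sin (((n + 1 : ℕ):ℝ) * θ₁) * (Real.sin ((k:ℝ) * θ) * Real.sin (((n + 1 : ℕ):ℝ) * θ)) := by
    intro θ
    rw [hN, mul_sub, Real.cos_sub]
    ring
  rw [intervalIntegral.integral_congr (fun θ _ => key θ),
    intervalIntegral.integral_add
      ((by fun_prop : Continuous fun θ : ℝ => Real.cos (((n + 1 : ℕ):ℝ) * θ₁) * (Real.cos (((n + 1 : ℕ):ℝ) * θ) * Real.sin ((k:ℝ) * θ))).intervalIntegrable _ _)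
      ((by fun_prop : Continuous fun θ : ℝ => Real.sin (((n + 1 : ℕ):ℝ) * θ₁) * (Real.sin ((k:ℝ) * θ) * Real.sin (((n + 1 : ℕ):ℝ) * θ))).intervalIntegrable _ _),
    intervalIntegral.integral_const_mul, intervalIntegral.integral_const_mul,
    orth_cs (n + 1) k, orth_ss k (n + 1) hk (by omega), mul_zero, zero_add]
  rcases eq_or_ne (n + 1) k with h | h
  · subst h
    simp [mul_comm]
  · simp [h, Ne.symm h]

/-- the Fourier coefficients of the Dirac delta "function":
as `ρ → 1⁻`, `(1/π)∫_{−π}^{π} cos(kθ)·u_δ(ρ,θ,θ₁) dθ → cos(kθ₁)/π` and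
`(1/π)∫_{−π}^{π} sin(kθ)·u_δ(ρ,θ,θ₁) dθ → sin(kθ₁)/π`. -/
theorem stmt_9 (θ₁ : ℝ) (k : ℕ) (hk : 0 < k) :
    Filter.Tendsto (fun ρ : ℝ =>
        (1 / Real.pi) * ∫ θ in (-Real.pi)..Real.pi,
          Real.cos (k * θ) *
            (1 / (2 * Real.pi) -
              (1 / Real.pi) * (ρ * (ρ - Real.cos (θ - θ₁))) /
                ((ρ ^ 2 + 1) - 2 * ρ * Real.cos (θ - θ₁))))
      (nhdsWithin 1 (Set.Iio 1)) (nhds (Real.cos (k * θ₁) / Real.pi)) ∧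
    Filter.Tendsto (fun ρ : ℝ =>
        (1 / Real.pi) * ∫ θ in (-Real.pi)..Real.pi,
          Real.sin (k * θ) *
            (1 / (2 * Real.pi) -
              (1 / Real.pi) * (ρ * (ρ - Real.cos (θ - θ₁))) /
                ((ρ ^ 2 + 1) - 2 * ρ * Real.cos (θ - θ₁))))
      (nhdsWithin 1 (Set.Iio 1)) (nhds (Real.sin (k * θ₁) / Real.pi)) := by
  have hk' : k ≠ 0 := hk.ne'
  have hmem : Set.Ioo (0:ℝ) 1 ∈ nhdsWithin (1:ℝ) (Set.Iio 1) :=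
    Ioo_mem_nhdsLT_of_mem (by constructor <;> norm_num)
  constructor
  · have hev : ∀ᶠ ρ in nhdsWithin (1:ℝ) (Set.Iio 1),
        (fun ρ : ℝ => (1 / Real.pi) * (ρ ^ k * Real.cos (k * θ₁))) ρ =
        (1 / Real.pi) * ∫ θ in (-Real.pi)..Real.pi,
          Real.cos (k * θ) *
            (1 / (2 * Real.pi) -
              (1 / Real.pi) * (ρ * (ρ - Real.cos (θ - θ₁))) /
                ((ρ ^ 2 + 1) - 2 * ρ * Real.cos (θ - θ₁))) := by
      filter_upwards [hmem] with ρ hρ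
      rw [integral_u θ₁ k hk hρ.1.le hρ.2 (fun θ => Real.cos (k * θ)) (Real.cos (k * θ₁))
        (by fun_prop) (fun x => Real.abs_cos_le_one _)
        (by simpa using int_cos_izero (k:ℤ) (by exact_mod_cast hk'))
        (horth_cos θ₁ k hk')]
    have hlim : Filter.Tendsto (fun ρ : ℝ => (1 / Real.pi) * (ρ ^ k * Real.cos (k * θ₁)))
        (nhdsWithin 1 (Set.Iio 1)) (nhds (Real.cos (k * θ₁) / Real.pi)) := by
      have hc : Filter.Tendsto (fun ρ : ℝ => (1 / Real.pi) * (ρ ^ k * Real.cos (k * θ₁)))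
          (nhds 1) (nhds ((1 / Real.pi) * ((1:ℝ) ^ k * Real.cos (k * θ₁)))) :=
        ((continuous_const.mul ((continuous_pow k).mul continuous_const)).tendsto 1)
      have : (1 / Real.pi) * ((1:ℝ) ^ k * Real.cos (k * θ₁)) = Real.cos (k * θ₁) / Real.pi := by
        rw [one_pow]; ring
      rw [this] at hc
      exact hc.mono_left nhdsWithin_le_nhds
    exact hlim.congr' hev
  · have hev : ∀ᶠ ρ in nhdsWithin (1:ℝ) (Set.Iio 1),
        (fun ρ : ℝ => (1 / Real.pi) * (ρ ^ k * Real.sin (k * θ₁))) ρ =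
        (1 / Real.pi) * ∫ θ in (-Real.pi)..Real.pi,
          Real.sin (k * θ) *
            (1 / (2 * Real.pi) -
              (1 / Real.pi) * (ρ * (ρ - Real.cos (θ - θ₁))) /
                ((ρ ^ 2 + 1) - 2 * ρ * Real.cos (θ - θ₁))) := by
      filter_upwards [hmem] with ρ hρ
      rw [integral_u θ₁ k hk hρ.1.le hρ.2 (fun θ => Real.sin (k * θ)) (Real.sin (k * θ₁))
        (by fun_prop) (fun x => Real.abs_sin_le_one _)
        (by simpa using int_sin_izero (k:ℤ))
        (horth_sin θ₁ k hk')]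
    have hlim : Filter.Tendsto (fun ρ : ℝ => (1 / Real.pi) * (ρ ^ k * Real.sin (k * θ₁)))
        (nhdsWithin 1 (Set.Iio 1)) (nhds (Real.sin (k * θ₁) / Real.pi)) := by
      have hc : Filter.Tendsto (fun ρ : ℝ => (1 / Real.pi) * (ρ ^ k * Real.sin (k * θ₁)))
          (nhds 1) (nhds ((1 / Real.pi) * ((1:ℝ) ^ k * Real.sin (k * θ₁)))) :=
        ((continuous_const.mul ((continuous_pow k).mul continuous_const)).tendsto 1)
      have : (1 / Real.pi) * ((1:ℝ) ^ k * Real.sin (k * θ₁)) = Real.sin (k * θ₁) / Real.pi := by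
        rw [one_pow]; ring
      rw [this] at hc
      exact hc.mono_left nhdsWithin_le_nhds
    exact hlim.congr' hev
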